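/- Let H be a bipartite vertex-line incidence graph as follows: A has k(t²-t+1) vertices in buckets of size k indexed by points of a projective plane of order t-1, B is the set of t²-t+1 lines, and v ∈ A is adjacent to ℓ ∈ B iff the point of v's bucket lies on ℓ. Then for every set X ⊆ A with |X| ≥ 9kt, at most t²/2 lines ℓ ∈ B have fewer than |X|/(2t) neighbours in X. -/

import Mathlib

open Finset

set_option maxHeartbeats 1000000 in

theorem stmt19 {Pt Ln : Type*} [Fintype Pt] [Fintype Ln] [DecidableEq Pt] [DecidableEq Ln]
    (t k : ℕ) (ht : 2 ≤ t) (hk : 1 ≤ k) (mem : Pt → Ln → Prop) [∀ p l, Decidable (mem p l)]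
    (hP : Fintype.card Pt = t ^ 2 - t + 1) (hL : Fintype.card Ln = t ^ 2 - t + 1)
    (hline : ∀ l, (univ.filter fun p => mem p l).card = t)
    (hpoint : ∀ p, (univ.filter fun l => mem p l).card = t)
    (htwo : ∀ p p' : Pt, p ≠ p' → ∃! l, mem p l ∧ mem p' l)
    (X : Finset (Fin k × Pt)) (hX : 9 * k * t ≤ X.card) :
    2 * (univ.filter fun l : Ln =>
        2 * t * (X.filter fun v => mem v.2 l).card < X.card).card ≤ t ^ 2 := by
  classical
  set x : Pt → ℕ := fun p => (X.filter fun v => v.2 = p).card with hxdef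
  set e : Ln → ℕ := fun l => (X.filter fun v => mem v.2 l).card with hedef
  set m : ℕ := X.card with hmdef
  -- m = sum of bucket sizes
  have hm : ∑ p, x p = m :=
    (Finset.card_eq_sum_card_fiberwise (f := Prod.snd) (fun v _ => mem_univ v.2)).symm
  -- e l as a sum
  have he : ∀ l, e l = ∑ p, if mem p l then x p else 0 := by
    intro l
    rw [← Finset.sum_filter]
    have key := Finset.card_eq_sum_card_fiberwise (s := X.filter fun v => mem v.2 l)
      (f := Prod.snd) (t := univ.filter fun p => mem p l)
      (fun v hv => by
        simp only [coe_filter, Finset.mem_coe, mem_filter, mem_univ, true_and, Set.mem_setOf_eq] at hv ⊢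
        exact hv.2)
    rw [hedef]
    simp only []
    rw [key]
    refine Finset.sum_congr rfl fun p hp => ?_
    simp only [mem_filter, mem_univ, true_and] at hp
    rw [hxdef]
    congr 1
    rw [Finset.filter_filter]
    ext v
    simp only [mem_filter]
    constructor
    · rintro ⟨hv, -, h2⟩; exact ⟨hv, h2⟩
    · rintro ⟨hv, h2⟩; exact ⟨hv, h2 ▸ hp, h2⟩
  -- first moment
  have h1 : ∑ l, e l = t * m := by
    simp only [he]
    rw [Finset.sum_comm]
    have step : ∀ p, (∑ l, if mem p l then x p else 0) = x p * t := by
      intro p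
      rw [← Finset.sum_filter, Finset.sum_const, hpoint p, smul_eq_mul, mul_comm]
    rw [Finset.sum_congr rfl fun p _ => step p, ← Finset.sum_mul, hm, mul_comm]
  -- pair counts
  have hcount : ∀ p q : Pt, (univ.filter fun l => mem p l ∧ mem q l).card
      = if p = q then t else 1 := by
    intro p q
    split_ifs with h
    · subst h; simp only [and_self]; exact hpoint p
    · obtain ⟨l, hl, hu⟩ := htwo p q h
      rw [Finset.card_eq_one]
      refine ⟨l, ?_⟩
      ext l'
      simp only [mem_filter, mem_univ, true_and, Finset.mem_singleton]
      exact ⟨fun h' => hu l' h', fun h' => h' ▸ hl⟩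
  -- second moment
  have h2 : (∑ l, (e l : ℚ)^2) = (m:ℚ)^2 + ((t:ℚ) - 1) * ∑ p, (x p : ℚ)^2 := by
    have heq : ∀ l, (e l : ℚ) = ∑ p, if mem p l then (x p : ℚ) else 0 := by
      intro l; rw [he l]; push_cast; rfl
    have hsq : ∀ l, (e l : ℚ)^2
        = ∑ p, ∑ q, if mem p l ∧ mem q l then (x p : ℚ) * (x q : ℚ) else 0 := by
      intro l
      rw [sq, heq l, Finset.sum_mul_sum]
      refine Finset.sum_congr rfl fun p _ => Finset.sum_congr rfl fun q _ => ?_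
      by_cases h1 : mem p l <;> by_cases h2 : mem q l <;> simp [h1, h2]
    calc ∑ l, (e l : ℚ)^2
        = ∑ p, ∑ q, ∑ l, if mem p l ∧ mem q l then (x p : ℚ) * (x q : ℚ) else 0 := by
          rw [Finset.sum_congr rfl fun l _ => hsq l, Finset.sum_comm]
          exact Finset.sum_congr rfl fun p _ => Finset.sum_comm
      _ = ∑ p, ∑ q, (x p : ℚ) * (x q : ℚ) * (if p = q then (t:ℚ) else 1) := by
          refine Finset.sum_congr rfl fun p _ => Finset.sum_congr rfl fun q _ => ?_
          rw [← Finset.sum_filter, Finset.sum_const, nsmul_eq_mul, hcount p q, mul_comm]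
          split_ifs <;> push_cast <;> ring
      _ = ∑ p, ∑ q, ((x p : ℚ) * (x q : ℚ)
            + if p = q then (x p : ℚ) * (x q : ℚ) * ((t:ℚ) - 1) else 0) := by
          refine Finset.sum_congr rfl fun p _ => Finset.sum_congr rfl fun q _ => ?_
          split_ifs <;> ring
      _ = (m:ℚ)^2 + ((t:ℚ) - 1) * ∑ p, (x p : ℚ)^2 := by
          simp only [Finset.sum_add_distrib]
          rw [← Finset.sum_mul_sum]
          have hmq : (∑ p, (x p : ℚ)) = (m:ℚ) := by exact_mod_cast congrArg (Nat.cast : ℕ → ℚ) hm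
          rw [hmq]
          congr 1
          · ring
          · rw [Finset.sum_congr rfl fun p _ => Finset.sum_ite_eq (univ : Finset Pt) p
              (fun q => (x p : ℚ) * (x q : ℚ) * ((t:ℚ) - 1))]
            simp only [mem_univ, if_true]
            rw [Finset.mul_sum]
            exact Finset.sum_congr rfl fun p _ => by ring
  -- bucket sizes ≤ k
  have hxk : ∀ p, x p ≤ k := by
    intro p
    have := Finset.card_le_card_of_injOn (f := Prod.fst)
      (s := X.filter fun v => v.2 = p) (t := (univ : Finset (Fin k)))
      (fun v _ => mem_univ _)
      (by
        intro v hv w hw hfw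
        simp only [coe_filter, Set.mem_setOf_eq] at hv hw
        exact Prod.ext hfw (hv.2.trans hw.2.symm))
    simpa using this
  have hx2 : (∑ p, (x p : ℚ)^2) ≤ (k:ℚ) * (m:ℚ) := by
    have : (∑ p, (x p : ℚ)^2) ≤ ∑ p, (k:ℚ) * (x p : ℚ) := by
      refine Finset.sum_le_sum fun p _ => ?_
      rw [sq]
      have hxp : (x p : ℚ) ≤ (k:ℚ) := by exact_mod_cast hxk p
      exact mul_le_mul_of_nonneg_right hxp (by positivity)
    rw [← Finset.mul_sum] at this
    have hmq : (∑ p, (x p : ℚ)) = (m:ℚ) := by exact_mod_cast congrArg (Nat.cast : ℕ → ℚ) hm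
    rwa [hmq] at this
  -- numeric facts
  have htq : (2:ℚ) ≤ (t:ℚ) := by exact_mod_cast ht
  have htpos : (0:ℚ) < t := by linarith
  have hkq : (1:ℚ) ≤ (k:ℚ) := by exact_mod_cast hk
  have hmlb : (9:ℚ) * k * t ≤ (m:ℚ) := by exact_mod_cast hX
  have hmpos : (0:ℚ) < m := by nlinarith
  set n : ℚ := (Fintype.card Ln : ℚ) with hndef
  have hn1 : (1:ℚ) ≤ n := by
    rw [hndef, hL]; exact_mod_cast Nat.succ_le_of_lt (Nat.succ_le_iff.mp (Nat.le_add_left 1 _))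
  have hnpos : (0:ℚ) < n := by linarith
  have hnle : n ≤ (t:ℚ)^2 := by
    rw [hndef, hL]
    have h1 : t ^ 2 - t + 1 ≤ t ^ 2 := by
      have : t ≤ t ^ 2 := by nlinarith
      omega
    calc ((t ^ 2 - t + 1 : ℕ) : ℚ) ≤ ((t ^ 2 : ℕ) : ℚ) := by exact_mod_cast h1
      _ = (t:ℚ)^2 := by push_cast; ring
  set c : ℚ := (t:ℚ) * m / n with hcdef
  have hsum1 : (∑ l, (e l : ℚ)) = (t:ℚ) * m := by exact_mod_cast congrArg (Nat.cast : ℕ → ℚ) h1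
  -- variance identity
  have hvar : (∑ l, ((e l : ℚ) - c)^2) = (∑ l, (e l : ℚ)^2) - ((t:ℚ) * m)^2 / n := by
    have expand : ∀ l, ((e l : ℚ) - c)^2 = (e l : ℚ)^2 - 2*c*(e l : ℚ) + c^2 := fun l => by ring
    rw [Finset.sum_congr rfl fun l _ => expand l, Finset.sum_add_distrib,
      Finset.sum_sub_distrib, ← Finset.mul_sum, hsum1, Finset.sum_const, Finset.card_univ,
      nsmul_eq_mul, ← hndef, hcdef]
    field_simp
    ring
  -- lower bound for Y elements
  set Y : Finset Ln := univ.filter (fun l => 2 * t * e l < m) with hYdef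
  have hclb : (m:ℚ) / t ≤ c := by
    have h0 : (t:ℚ) * m / (t:ℚ)^2 ≤ (t:ℚ) * m / n := by
      apply div_le_div_of_nonneg_left (by positivity) hnpos hnle
    calc (m:ℚ) / t = (t:ℚ) * m / (t:ℚ)^2 := by field_simp
      _ ≤ c := h0
  have hYlb : ∀ l ∈ Y, ((m:ℚ)/(2*t))^2 ≤ ((e l : ℚ) - c)^2 := by
    intro l hl
    rw [hYdef, mem_filter] at hl
    have hel : (e l : ℚ) < (m:ℚ) / (2*t) := by
      rw [lt_div_iff₀ (by positivity)]
      calc (e l : ℚ) * (2*t) = ((2 * t * e l : ℕ) : ℚ) := by push_cast; ring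
        _ < (m:ℚ) := by exact_mod_cast hl.2
    have hdev : (m:ℚ)/(2*t) ≤ c - (e l : ℚ) := by
      have : (m:ℚ)/t - (m:ℚ)/(2*t) = (m:ℚ)/(2*t) := by field_simp; ring
      linarith
    have h0 : (0:ℚ) ≤ (m:ℚ)/(2*t) := by positivity
    calc ((m:ℚ)/(2*t))^2 ≤ (c - (e l : ℚ))^2 := by
          apply pow_le_pow_left₀ h0 hdev
      _ = ((e l : ℚ) - c)^2 := by ring
  -- main chain
  have hchain : (Y.card : ℚ) * ((m:ℚ)/(2*t))^2 ≤ (t:ℚ) * k * m := by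
    calc (Y.card : ℚ) * ((m:ℚ)/(2*t))^2 = ∑ _l ∈ Y, ((m:ℚ)/(2*t))^2 := by
          rw [Finset.sum_const, nsmul_eq_mul]
      _ ≤ ∑ l ∈ Y, ((e l : ℚ) - c)^2 := Finset.sum_le_sum hYlb
      _ ≤ ∑ l, ((e l : ℚ) - c)^2 :=
          Finset.sum_le_sum_of_subset_of_nonneg (Finset.subset_univ Y)
            (fun l _ _ => by positivity)
      _ = (∑ l, (e l : ℚ)^2) - ((t:ℚ) * m)^2 / n := hvar
      _ ≤ (m:ℚ)^2 + ((t:ℚ) - 1) * ((k:ℚ) * m) - ((t:ℚ) * m)^2 / n := by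
          rw [h2]
          have := mul_le_mul_of_nonneg_left hx2 (by linarith : (0:ℚ) ≤ (t:ℚ) - 1)
          linarith
      _ ≤ (t:ℚ) * k * m := by
          have hdiv : (m:ℚ)^2 ≤ ((t:ℚ) * m)^2 / n := by
            rw [le_div_iff₀ hnpos]
            calc (m:ℚ)^2 * n ≤ (m:ℚ)^2 * (t:ℚ)^2 :=
                mul_le_mul_of_nonneg_left hnle (by positivity)
              _ = ((t:ℚ) * m)^2 := by ring
          have hkm : (0:ℚ) ≤ (k:ℚ) * m := by positivity
          have heq : ((t:ℚ) - 1) * ((k:ℚ) * m) = (t:ℚ) * k * m - (k:ℚ) * m := by ring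
          linarith
  -- conclude
  have hYb : (9:ℚ) * (Y.card : ℚ) ≤ 4 * (t:ℚ)^2 := by
    have h4 : (Y.card : ℚ) * (m:ℚ)^2 ≤ 4 * (t:ℚ)^3 * k * m := by
      have := mul_le_mul_of_nonneg_right hchain (by positivity : (0:ℚ) ≤ 4 * (t:ℚ)^2)
      have ht4 : (4:ℚ) * (t:ℚ)^2 ≠ 0 := by positivity
      have hrw : (Y.card : ℚ) * ((m:ℚ)/(2*t))^2 * (4 * (t:ℚ)^2)
          = (Y.card : ℚ) * (m:ℚ)^2 := by
        calc (Y.card : ℚ) * ((m:ℚ)/(2*t))^2 * (4 * (t:ℚ)^2)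
            = (Y.card : ℚ) * ((m:ℚ)^2/(4*(t:ℚ)^2) * (4*(t:ℚ)^2)) := by
              rw [div_pow]; ring
          _ = (Y.card : ℚ) * (m:ℚ)^2 := by rw [div_mul_cancel₀ _ ht4]
      rw [hrw] at this
      calc (Y.card : ℚ) * (m:ℚ)^2 ≤ (t:ℚ) * k * m * (4 * (t:ℚ)^2) := this
        _ = 4 * (t:ℚ)^3 * k * m := by ring
    have h5 : (9:ℚ) * (Y.card : ℚ) * ((k:ℚ) * t * m) ≤ 4 * (t:ℚ)^2 * ((k:ℚ) * t * m) := by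
      have hYm : (Y.card : ℚ) * ((9:ℚ) * k * t) * m ≤ (Y.card : ℚ) * (m:ℚ) * m := by
        have : (Y.card : ℚ) * ((9:ℚ) * k * t) ≤ (Y.card : ℚ) * m :=
          mul_le_mul_of_nonneg_left hmlb (by positivity)
        exact mul_le_mul_of_nonneg_right this (le_of_lt hmpos)
      calc (9:ℚ) * (Y.card : ℚ) * ((k:ℚ) * t * m) = (Y.card : ℚ) * ((9:ℚ) * k * t) * m := by ring
        _ ≤ (Y.card : ℚ) * (m:ℚ) * m := hYm
        _ = (Y.card : ℚ) * (m:ℚ)^2 := by ring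
        _ ≤ 4 * (t:ℚ)^3 * k * m := h4
        _ = 4 * (t:ℚ)^2 * ((k:ℚ) * t * m) := by ring
    have hpos : (0:ℚ) < (k:ℚ) * t * m := by positivity
    exact le_of_mul_le_mul_right h5 hpos
  have hfinal : ((2 * Y.card : ℕ) : ℚ) ≤ ((t^2 : ℕ) : ℚ) := by
    push_cast
    have ht2 : (0:ℚ) ≤ (t:ℚ)^2 := by positivity
    linarith
  exact_mod_cast hfinal
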